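/- Let N ≥ 1, M > 0, x, y ∈ ℝ^N with all components in [0, M], let 0 < δ < M, let F : K_x → K_y satisfy |d²(p,q) − d²(F(p), F(q))| ≤ 2δ for all p, q ∈ K_x, and let σ : {1,…,N} → {1,…,N} be an injective map satisfying F(□(n)) ⊆ □(σ(n)) for all n. Then |σ(n) − σ(m)| = 1 for all n, m ∈ {1,…,N} with |n − m| = 1. -/
import Mathlib


noncomputable def box (M : ℝ) (n : ℕ) : Set (ℝ × ℝ) :=
  Set.Icc (4 * M + 10 * M * (n : ℝ)) (4 * M + 10 * M * (n : ℝ) + 2 * M) ×ˢ Set.Icc (-M) M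

noncomputable def pp {N : ℕ} (M : ℝ) (z : Fin N → ℝ) (n : Fin N) : ℝ × ℝ :=
  (10 * M * ((n : ℕ) : ℝ), z n)

noncomputable def pm {N : ℕ} (M : ℝ) (z : Fin N → ℝ) (n : Fin N) : ℝ × ℝ :=
  (10 * M * ((n : ℕ) : ℝ), -(z n))

noncomputable def Kset {N : ℕ} (M : ℝ) (z : Fin N → ℝ) : Set (ℝ × ℝ) :=
  ⋃ n : Fin N, ({pp M z n, pm M z n} ∪ box M n)

theorem pp_mem {N : ℕ} (M : ℝ) (z : Fin N → ℝ) (n : Fin N) : pp M z n ∈ Kset M z :=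
  Set.mem_iUnion.mpr ⟨n, Or.inl (Set.mem_insert _ _)⟩

theorem pm_mem {N : ℕ} (M : ℝ) (z : Fin N → ℝ) (n : Fin N) : pm M z n ∈ Kset M z :=
  Set.mem_iUnion.mpr ⟨n, Or.inl (Set.mem_insert_of_mem _ rfl)⟩

theorem Kset_compact {N : ℕ} (M : ℝ) (z : Fin N → ℝ) : IsCompact (Kset M z) := by
  apply isCompact_iUnion
  intro n
  exact ((Set.toFinite _).isCompact).union (isCompact_Icc.prod isCompact_Icc)

instance {N : ℕ} (M : ℝ) (z : Fin N → ℝ) : CompactSpace ↥(Kset M z) :=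
  isCompact_iff_compactSpace.mp (Kset_compact M z)

theorem Kset_nonempty {N : ℕ} (hN : 0 < N) (M : ℝ) (z : Fin N → ℝ) : (Kset M z).Nonempty :=
  ⟨pp M z ⟨0, hN⟩, pp_mem M z ⟨0, hN⟩⟩

/-- Step 5: σ maps adjacent indices to adjacent indices. -/
theorem step5_sigma_adjacent {N : ℕ} (hN : 0 < N) {M : ℝ} (hM : 0 < M)
    (x y : Fin N → ℝ) (hx : ∀ n, x n ∈ Set.Icc (0 : ℝ) M) (hy : ∀ n, y n ∈ Set.Icc (0 : ℝ) M)
    {δ : ℝ} (hδ0 : 0 < δ) (hδM : δ < M)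
    (F : ↥(Kset M x) → ↥(Kset M y))
    (hF : ∀ p q : ↥(Kset M x), |dist p q - dist (F p) (F q)| ≤ 2 * δ)
    (σ : Fin N → Fin N) (hσinj : Function.Injective σ)
    (hσ : ∀ n : Fin N, ∀ p : ↥(Kset M x),
      (p : ℝ × ℝ) ∈ box M n → (F p : ℝ × ℝ) ∈ box M (σ n)) :
    ∀ n m : Fin N, |((n : ℕ) : ℤ) - ((m : ℕ) : ℤ)| = 1 →
      |((σ n : ℕ) : ℤ) - ((σ m : ℕ) : ℤ)| = 1 := by
  intro n m hnm
  -- corner points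
  have hbox : ∀ k : Fin N, ((4*M + 10*M*((k:ℕ):ℝ), 0) : ℝ×ℝ) ∈ box M k := by
    intro k
    have hk : (0:ℝ) ≤ ((k:ℕ):ℝ) := Nat.cast_nonneg _
    simp only [box, Set.mem_prod, Set.mem_Icc]
    refine ⟨⟨le_refl _, by linarith⟩, ⟨by linarith, by linarith⟩⟩
  have hmem : ∀ k : Fin N, ((4*M + 10*M*((k:ℕ):ℝ), 0) : ℝ×ℝ) ∈ Kset M x := fun k =>
    Set.mem_iUnion.mpr ⟨k, Or.inr (hbox k)⟩
  set P : ↥(Kset M x) := ⟨((4*M + 10*M*((n:ℕ):ℝ), 0) : ℝ×ℝ), hmem n⟩ with hPdef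
  set Q : ↥(Kset M x) := ⟨((4*M + 10*M*((m:ℕ):ℝ), 0) : ℝ×ℝ), hmem m⟩ with hQdef
  have h1 : |((n:ℕ):ℝ) - ((m:ℕ):ℝ)| = 1 := by
    have : ((|((n:ℕ):ℤ) - ((m:ℕ):ℤ)| : ℤ) : ℝ) = 1 := by rw [hnm]; norm_num
    push_cast at this
    exact this
  have h1' := abs_le.mp h1.le
  have hdPQ : dist P Q ≤ 10 * M := by
    rw [Subtype.dist_eq, hPdef, hQdef, Prod.dist_eq]
    dsimp only
    apply max_le
    · rw [Real.dist_eq, abs_le]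
      constructor <;> nlinarith [h1'.1, h1'.2, hM.le]
    · simp [Real.dist_eq]
      linarith
  have hFPQ := hF P Q
  have hupper : dist (F P) (F Q) ≤ 10 * M + 2 * δ := by
    have := abs_le.mp hFPQ
    linarith [this.1]
  -- F P ∈ box M (σ n), F Q ∈ box M (σ m)
  have hFP := hσ n P (hbox n)
  have hFQ := hσ m Q (hbox m)
  obtain ⟨⟨hFP1, hFP2⟩, -⟩ := hFP
  obtain ⟨⟨hFQ1, hFQ2⟩, -⟩ := hFQ
  have hdistge : |((F P : ℝ×ℝ)).1 - ((F Q : ℝ×ℝ)).1| ≤ dist (F P) (F Q) := by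
    rw [Subtype.dist_eq, Prod.dist_eq]
    exact le_trans (le_of_eq (Real.dist_eq _ _).symm) (le_max_left _ _)
  -- σ n ≠ σ m
  have hne : (σ n : ℕ) ≠ (σ m : ℕ) := by
    intro h
    have : σ n = σ m := Fin.ext h
    have : n = m := hσinj this
    subst this
    simp at hnm
  -- rule out |σ n - σ m| ≥ 2
  have hA : ¬ ((σ n : ℕ) + 2 ≤ (σ m : ℕ)) := by
    intro h
    have hc : ((σ n : ℕ) : ℝ) + 2 ≤ ((σ m : ℕ) : ℝ) := by exact_mod_cast h
    have h18 : ((F Q : ℝ×ℝ)).1 - ((F P : ℝ×ℝ)).1 ≥ 18 * M := by nlinarith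
    have habs : |((F P : ℝ×ℝ)).1 - ((F Q : ℝ×ℝ)).1| ≥ 18 * M := by
      calc (18:ℝ) * M ≤ ((F Q : ℝ×ℝ)).1 - ((F P : ℝ×ℝ)).1 := h18
        _ ≤ |((F P : ℝ×ℝ)).1 - ((F Q : ℝ×ℝ)).1| := by
            rw [abs_sub_comm]; exact le_abs_self _
    linarith
  have hB : ¬ ((σ m : ℕ) + 2 ≤ (σ n : ℕ)) := by
    intro h
    have hc : ((σ m : ℕ) : ℝ) + 2 ≤ ((σ n : ℕ) : ℝ) := by exact_mod_cast h
    have h18 : ((F P : ℝ×ℝ)).1 - ((F Q : ℝ×ℝ)).1 ≥ 18 * M := by nlinarith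
    have habs := le_trans h18 (le_abs_self _)
    linarith
  rcases le_total ((σ n : ℕ) : ℤ) ((σ m : ℕ) : ℤ) with h | h
  · rw [abs_of_nonpos (by omega)]; omega
  · rw [abs_of_nonneg (by omega)]; omega
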